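/- For all a>0 and ρ>0, the four-dimensional stationary slow-diffusion density integrates to one: e^{-a} + ∫_{‖x‖<ρ} (a/(π²ρ⁴)) [2 + a(1 − ‖x‖²/ρ²)] exp(−(a/ρ²)‖x‖²) dx = 1, where the integral is over the open ball of radius ρ in ℝ⁴. -/

import Mathlib

open Real MeasureTheory

theorem stationary_density_4d_normalized (a ρ : ℝ) (ha : 0 < a) (hρ : 0 < ρ) :
    Real.exp (-a) +
      (∫ x in Metric.ball (0 : EuclideanSpace ℝ (Fin 4)) ρ,
        (a / (π ^ 2 * ρ ^ 4)) * (2 + a * (1 - ‖x‖ ^ 2 / ρ ^ 2)) *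
          Real.exp (-(a / ρ ^ 2) * ‖x‖ ^ 2)) = 1 := by
  have hπ : (0:ℝ) < π := Real.pi_pos
  set g : ℝ → ℝ := fun r =>
    (a / (π ^ 2 * ρ ^ 4)) * (2 + a * (1 - r ^ 2 / ρ ^ 2)) * Real.exp (-(a / ρ ^ 2) * r ^ 2)
    with hg
  set f : ℝ → ℝ := fun r => Set.indicator (Set.Iio ρ) g r with hf
  -- Step 1: rewrite as a full-space integral of a radial function
  have step1 : (∫ x in Metric.ball (0 : EuclideanSpace ℝ (Fin 4)) ρ,
        (a / (π ^ 2 * ρ ^ 4)) * (2 + a * (1 - ‖x‖ ^ 2 / ρ ^ 2)) *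
          Real.exp (-(a / ρ ^ 2) * ‖x‖ ^ 2))
      = ∫ x : EuclideanSpace ℝ (Fin 4), f ‖x‖ := by
    rw [← MeasureTheory.integral_indicator measurableSet_ball]
    congr 1
    funext x
    simp only [hf, Set.indicator, Metric.mem_ball, dist_zero_right, Set.mem_Iio, hg]
  rw [step1, integral_fun_norm_addHaar volume f]
  -- dimension
  have hdim : Module.finrank ℝ (EuclideanSpace ℝ (Fin 4)) = 4 := by
    simp [finrank_euclideanSpace]
  -- volume of unit ball
  have hvol : (volume (Metric.ball (0 : EuclideanSpace ℝ (Fin 4)) 1)).toReal = π ^ 2 / 2 := by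
    rw [EuclideanSpace.volume_ball]
    have hΓ : Real.Gamma ((Fintype.card (Fin 4) : ℝ) / 2 + 1) = 2 := by
      have : ((Fintype.card (Fin 4) : ℝ) / 2 + 1) = (2:ℕ) + 1 := by
        simp; norm_num
      rw [this, Real.Gamma_nat_eq_factorial]
      norm_num
    rw [hΓ]
    have h4 : Real.sqrt π ^ Fintype.card (Fin 4) = π ^ 2 := by
      rw [show Fintype.card (Fin 4) = 4 by simp, show (4:ℕ) = 2*2 by norm_num, pow_mul,
        Real.sq_sqrt hπ.le]
    rw [h4]
    rw [ENNReal.ofReal_one, one_pow, one_mul, ENNReal.toReal_ofReal (by positivity)]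
  rw [hdim]
  -- Step 4: reduce radial integral to interval integral
  have step4 : (∫ y in Set.Ioi (0:ℝ), y ^ (4 - 1) • f y)
      = ∫ y in (0:ℝ)..ρ, y ^ 3 * g y := by
    have : (fun y => y ^ (4-1) • f y) = fun y => Set.indicator (Set.Iio ρ) (fun y => y ^ 3 * g y) y := by
      funext y
      simp only [hf, Set.indicator, smul_eq_mul]
      split <;> simp
    rw [this, MeasureTheory.setIntegral_indicator measurableSet_Iio, Set.Ioi_inter_Iio,
      intervalIntegral.integral_of_le hρ.le, integral_Ioc_eq_integral_Ioo]
  rw [step4]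
  -- Step 5: FTC
  set C : ℝ := a / (π ^ 2 * ρ ^ 4) with hC
  set G : ℝ → ℝ := fun r => C * ((r^4/2 - ρ^2*r^2/2 - ρ^4/(2*a)) * Real.exp (-(a/ρ^2)*r^2))
    with hG
  have hderiv : ∀ r ∈ Set.uIcc (0:ℝ) ρ, HasDerivAt G (r ^ 3 * g r) r := by
    intro r _
    have h1 : HasDerivAt (fun r:ℝ => r^4/2 - ρ^2*r^2/2 - ρ^4/(2*a))
        (2*r^3 - ρ^2*r) r := by
      have := (((hasDerivAt_pow 4 r).div_const 2).sub
        (((hasDerivAt_pow 2 r).const_mul (ρ^2)).div_const 2)).sub_const (ρ^4/(2*a))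
      refine this.congr_deriv ?_
      push_cast
      ring
    have h2 : HasDerivAt (fun r:ℝ => Real.exp (-(a/ρ^2)*r^2))
        (Real.exp (-(a/ρ^2)*r^2) * (-(a/ρ^2)*(2*r))) r := by
      have hin : HasDerivAt (fun r:ℝ => -(a/ρ^2)*r^2) (-(a/ρ^2)*(2*r)) r := by
        have := (hasDerivAt_pow 2 r).const_mul (-(a/ρ^2))
        refine this.congr_deriv ?_
        push_cast
        ring
      exact hin.exp
    have := ((h1.mul h2).const_mul C)
    refine this.congr_deriv ?_
    simp only [hg]
    field_simp
    ring
  have hcont : IntervalIntegrable (fun y => y ^ 3 * g y) volume 0 ρ := by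
    apply Continuous.intervalIntegrable
    fun_prop
  rw [intervalIntegral.integral_eq_sub_of_hasDerivAt hderiv hcont]
  -- Step 6: arithmetic
  simp only [hG, hC]
  rw [measureReal_def, hvol]
  have hexp0 : Real.exp (-(a/ρ^2)*(0:ℝ)^2) = 1 := by norm_num
  have hexpρ : Real.exp (-(a/ρ^2)*ρ^2) = Real.exp (-a) := by
    congr 1
    field_simp
  rw [hexp0, hexpρ]
  have hρ4 : ρ^4 ≠ 0 := by positivity
  have hπ2 : π^2 ≠ 0 := by positivity
  simp only [smul_eq_mul, nsmul_eq_mul]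
  field_simp
  ring
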